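/- For every multi-relational database D = (E, t, 𝓡, R), the set system F_D of complete connected subsets of E is strongly accessible: it is accessible (for every nonempty X ∈ F_D there is e ∈ X with X \ {e} ∈ F_D), and for all X, Y ∈ F_D with X ⊊ Y there exists e ∈ Y \ X with X ∪ {e} ∈ F_D. -/

import Mathlib

/-- A multi-relational database over a finite entity set E: entities are
partitioned into k types by t; RT is the set of relationship types (unordered
pairs of distinct types); rel is the union of the binary relationships
(unordered pairs of entities whose pair of types is a relationship type). -/
structure MRD (E : Type*) (k : ℕ) where
  t : E → Fin k
  RT : Set (Sym2 (Fin k))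
  RT_not_diag : ∀ p ∈ RT, ¬ p.IsDiag
  rel : Set (Sym2 E)
  rel_types : ∀ p ∈ rel, p.map t ∈ RT

namespace MRD

variable {E : Type*} {k : ℕ}

/-- A set F is complete if any two of its entities whose pair of types is a
relationship type are related. -/
def Complete (D : MRD E k) (F : Set E) : Prop :=
  ∀ e ∈ F, ∀ e' ∈ F, s(D.t e, D.t e') ∈ D.RT → s(e, e') ∈ D.rel

/-- A set F is connected if any two of its elements are joined by a path inside
F whose consecutive elements form pairs in rel. -/
def Connected (D : MRD E k) (F : Set E) : Prop :=
  ∀ e ∈ F, ∀ e' ∈ F,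
    Relation.ReflTransGen (fun a b => a ∈ F ∧ b ∈ F ∧ s(a, b) ∈ D.rel) e e'

/-- A complete connected subset. -/
def CCS (D : MRD E k) (F : Set E) : Prop :=
  D.Complete F ∧ D.Connected F

/-- A maximal complete connected subset: a CCS to which no element can be added
remaining a CCS. -/
def MCCS (D : MRD E k) (F : Set E) : Prop :=
  D.CCS F ∧ ∀ e : E, D.CCS (insert e F) → e ∈ F

/-- Comp(F): the entities whose addition keeps F complete. -/
def Comp (D : MRD E k) (F : Set E) : Set E :=
  {e | D.Complete (insert e F)}

/-- Aug(F): the entities whose addition keeps F a CCS. -/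
def Aug (D : MRD E k) (F : Set E) : Set E :=
  {e | D.CCS (insert e F)}

/-- The operator g. -/
def g (D : MRD E k) (F : Set E) : Set E :=
  {e ∈ D.Aug F | D.Comp (insert e F) = D.Comp F}

end MRD
section Aux

namespace MRD

variable {E : Type*} {k : ℕ}

lemma complete_mono (D : MRD E k) {F G : Set E} (h : F ⊆ G) (hG : D.Complete G) :
    D.Complete F := fun e he e' he' hrt => hG e (h he) e' (h he') hrt

lemma ccs_empty (D : MRD E k) : D.CCS (∅ : Set E) :=
  ⟨fun e he => absurd he (Set.notMem_empty e),
   fun e he => absurd he (Set.notMem_empty e)⟩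

lemma ccs_singleton (D : MRD E k) (x : E) : D.CCS ({x} : Set E) := by
  constructor
  · intro e he e' he' hrt
    rw [Set.mem_singleton_iff] at he he'
    rw [he, he'] at hrt
    exact absurd (by simp : Sym2.IsDiag s(D.t x, D.t x)) (D.RT_not_diag _ hrt)
  · intro e he e' he'
    rw [Set.mem_singleton_iff] at he he'
    rw [he, he']

lemma crossing {r : E → E → Prop} {X : Set E} {x y : E}
    (h : Relation.ReflTransGen r x y) (hx : x ∈ X) (hy : y ∉ X) :
    ∃ a ∈ X, ∃ b, b ∉ X ∧ r a b := by
  induction h with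
  | refl => exact absurd hx hy
  | @tail c d h' hr ih =>
    by_cases hc : c ∈ X
    · exact ⟨c, hc, d, hy, hr⟩
    · exact ih hc

lemma connected_insert (D : MRD E k) {X : Set E} {a e : E}
    (hX : D.Connected X) (ha : a ∈ X) (he : s(a, e) ∈ D.rel) :
    D.Connected (insert e X) := by
  set S : Set E := insert e X with hS
  set r' : E → E → Prop := fun u v => u ∈ S ∧ v ∈ S ∧ s(u, v) ∈ D.rel with hr'
  have hsymm : Symmetric r' := by
    intro u v ⟨h1, h2, h3⟩
    exact ⟨h2, h1, by rwa [Sym2.eq_swap]⟩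
  have key : ∀ u ∈ S, Relation.ReflTransGen r' u a := by
    intro u hu
    rcases Set.mem_insert_iff.mp hu with h | h
    · subst h
      exact Relation.ReflTransGen.single
        ⟨Set.mem_insert _ _, Set.mem_insert_of_mem _ ha, by rwa [Sym2.eq_swap]⟩
    · refine Relation.ReflTransGen.mono ?_ _ _ (hX u h a ha)
      intro p q ⟨h1, h2, h3⟩
      exact ⟨Set.mem_insert_of_mem _ h1, Set.mem_insert_of_mem _ h2, h3⟩
  intro u hu v hv
  exact (key u hu).trans ((@Relation.ReflTransGen.stdSymm _ r' ⟨fun _ _ h => hsymm h⟩).symm _ _ (key v hv))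

lemma exchange (D : MRD E k) {X Y : Set E} (hX : D.CCS X) (hY : D.CCS Y)
    (hXY : X ⊂ Y) : ∃ e ∈ Y \ X, D.CCS (insert e X) := by
  obtain ⟨y, hyY, hyX⟩ := Set.exists_of_ssubset hXY
  rcases X.eq_empty_or_nonempty with hXe | ⟨x, hx⟩
  · subst hXe
    refine ⟨y, ⟨hyY, Set.notMem_empty y⟩, ?_⟩
    simpa using D.ccs_singleton y
  · have hpath := hY.2 x (hXY.1 hx) y hyY
    obtain ⟨a, haX, b, hbX, hab⟩ := crossing hpath hx hyX
    obtain ⟨haY, hbY, hrel⟩ := hab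
    refine ⟨b, ⟨hbY, hbX⟩, ?_, ?_⟩
    · refine D.complete_mono ?_ hY.1
      exact Set.insert_subset hbY hXY.1
    · exact D.connected_insert hX.2 haX hrel

end MRD

end Aux


/-- the set system of CCSs of a multi-relational database is
strongly accessible. -/
theorem ccs_strongly_accessible {E : Type*} [Fintype E] {k : ℕ} (D : MRD E k) :
    (∀ X : Set E, D.CCS X → X.Nonempty → ∃ e ∈ X, D.CCS (X \ {e})) ∧
    (∀ X Y : Set E, D.CCS X → D.CCS Y → X ⊂ Y →
      ∃ e ∈ Y \ X, D.CCS (insert e X)) := by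

  have exch : ∀ X Y : Set E, D.CCS X → D.CCS Y → X ⊂ Y →
      ∃ e ∈ Y \ X, D.CCS (insert e X) := fun X Y hX hY h => D.exchange hX hY h
  refine ⟨?_, exch⟩
  intro X hX hne
  obtain ⟨x, hx⟩ := hne
  by_cases hXs : X = {x}
  · refine ⟨x, hx, ?_⟩
    rw [hXs]
    simpa using D.ccs_empty
  · -- take a maximal proper CCS subset of X
    have hsx : ({x} : Set E) ⊂ X :=
      HasSubset.Subset.ssubset_of_ne (Set.singleton_subset_iff.mpr hx) (Ne.symm hXs)
    set S : Set (Set E) := {F | D.CCS F ∧ F ⊂ X} with hSdef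
    have hSfin : S.Finite := Set.toFinite S
    have hSne : S.Nonempty := ⟨{x}, D.ccs_singleton x, hsx⟩
    obtain ⟨F, hFS, hFmax⟩ := Set.Finite.exists_maximalFor id S hSfin hSne
    obtain ⟨hFccs, hFX⟩ := hFS
    obtain ⟨e, ⟨heX, heF⟩, hccs⟩ := D.exchange hFccs hX hFX
    have hsub : insert e F ⊆ X := Set.insert_subset heX hFX.1
    have heq : insert e F = X := by
      by_contra hne'
      have hmem : insert e F ∈ S := ⟨hccs, HasSubset.Subset.ssubset_of_ne hsub hne'⟩
      have := hFmax hmem (Set.subset_insert e F)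
      simp only [id] at this
      exact heF (this (Set.mem_insert e F))
    refine ⟨e, heX, ?_⟩
    have : X \ {e} = F := by
      rw [← heq, Set.insert_diff_self_of_notMem heF]
    rwa [this]
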